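/- The convex hull of the curve { (cos φ, sin φ, cos²φ − sin²φ) : 0 ≤ φ ≤ 2π } in ℝ³ equals the set { (x, y, z) ∈ ℝ³ : x² + y² ≤ 1 and 2x² − 1 ≤ z ≤ 1 − 2y² }. -/
import Mathlib


open Real

/-- Any point of the unit circle together with the corresponding third coordinate
lies on the curve. -/
lemma mem_curve {a b : ℝ} (hab : a ^ 2 + b ^ 2 = 1) :
    ((a, b, 2 * a ^ 2 - 1) : ℝ × ℝ × ℝ) ∈
      {x : ℝ × ℝ × ℝ | ∃ φ : ℝ, 0 ≤ φ ∧ φ ≤ 2 * π ∧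
        x = (Real.cos φ, Real.sin φ, Real.cos φ ^ 2 - Real.sin φ ^ 2)} := by
  have ha1 : -1 ≤ a := by nlinarith [sq_nonneg b]
  have ha2 : a ≤ 1 := by nlinarith [sq_nonneg b]
  have hpi : (0:ℝ) < π := Real.pi_pos
  have hcos : Real.cos (Real.arccos a) = a := Real.cos_arccos ha1 ha2
  have hsin : Real.sin (Real.arccos a) = Real.sqrt (1 - a ^ 2) := by
    rw [Real.sin_arccos]
  have h1a : 1 - a ^ 2 = b ^ 2 := by linarith
  rcases le_or_gt 0 b with hb | hb
  · refine ⟨Real.arccos a, Real.arccos_nonneg a, ?_, ?_⟩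
    · linarith [Real.arccos_le_pi a]
    · have : Real.sin (Real.arccos a) = b := by
        rw [hsin, h1a, Real.sqrt_sq hb]
      rw [hcos, this]
      have : a ^ 2 - b ^ 2 = 2 * a ^ 2 - 1 := by linarith
      simp [this]
  · refine ⟨2 * π - Real.arccos a, ?_, ?_, ?_⟩
    · linarith [Real.arccos_le_pi a]
    · linarith [Real.arccos_nonneg a]
    · have hc : Real.cos (2 * π - Real.arccos a) = a := by
        rw [Real.cos_sub]; simp [hcos]
      have hs : Real.sin (2 * π - Real.arccos a) = b := by
        rw [Real.sin_sub]
        simp only [Real.sin_two_pi, Real.cos_two_pi, zero_mul, one_mul, zero_sub]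
        rw [hsin, h1a, Real.sqrt_sq_eq_abs, abs_of_neg hb, neg_neg]
      rw [hc, hs]
      have : a ^ 2 - b ^ 2 = 2 * a ^ 2 - 1 := by linarith
      simp [this]

/-- Membership in a real interval gives convex coefficients. -/
lemma exists_coeffs {c d m : ℝ} (hcd : c ≤ d) (h1 : c ≤ m) (h2 : m ≤ d) :
    ∃ u v : ℝ, 0 ≤ u ∧ 0 ≤ v ∧ u + v = 1 ∧ u * c + v * d = m := by
  have : m ∈ segment ℝ c d := by
    rw [segment_eq_Icc hcd]; exact ⟨h1, h2⟩
  rcases this with ⟨u, v, hu, hv, huv, h⟩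
  exact ⟨u, v, hu, hv, huv, by simpa [smul_eq_mul] using h⟩

/-- Convexity of the square function, in explicit form. -/
lemma sq_combo {u v p q : ℝ} (hu : 0 ≤ u) (hv : 0 ≤ v) (huv : u + v = 1) :
    (u * p + v * q) ^ 2 ≤ u * p ^ 2 + v * q ^ 2 := by
  have hv' : v = 1 - u := by linarith
  subst hv'
  nlinarith [mul_nonneg hu hv, sq_nonneg (p - q)]

theorem stmt_18 :
    convexHull ℝ
      {x : ℝ × ℝ × ℝ | ∃ φ : ℝ, 0 ≤ φ ∧ φ ≤ 2 * π ∧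
        x = (Real.cos φ, Real.sin φ, Real.cos φ ^ 2 - Real.sin φ ^ 2)}
    = {x : ℝ × ℝ × ℝ | x.1 ^ 2 + x.2.1 ^ 2 ≤ 1 ∧
        2 * x.1 ^ 2 - 1 ≤ x.2.2 ∧ x.2.2 ≤ 1 - 2 * x.2.1 ^ 2} := by
  set S : Set (ℝ × ℝ × ℝ) := {x : ℝ × ℝ × ℝ | ∃ φ : ℝ, 0 ≤ φ ∧ φ ≤ 2 * π ∧
        x = (Real.cos φ, Real.sin φ, Real.cos φ ^ 2 - Real.sin φ ^ 2)} with hS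
  have hconv : Convex ℝ (convexHull ℝ S) := convex_convexHull ℝ S
  have hsub : S ⊆ convexHull ℝ S := subset_convexHull ℝ S
  -- bottom surface points are in the hull
  have bottom : ∀ x y : ℝ, x ^ 2 + y ^ 2 ≤ 1 →
      ((x, y, 2 * x ^ 2 - 1) : ℝ × ℝ × ℝ) ∈ convexHull ℝ S := by
    intro x y hxy
    set s := Real.sqrt (1 - x ^ 2) with hs
    have hx1 : 0 ≤ 1 - x ^ 2 := by nlinarith [sq_nonneg y]
    have hs2 : s ^ 2 = 1 - x ^ 2 := Real.sq_sqrt hx1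
    have hsnn : 0 ≤ s := Real.sqrt_nonneg _
    have hP : ((x, s, 2 * x ^ 2 - 1) : ℝ × ℝ × ℝ) ∈ S := mem_curve (by linarith)
    have hQ : ((x, -s, 2 * x ^ 2 - 1) : ℝ × ℝ × ℝ) ∈ S := mem_curve (by nlinarith)
    have hy2 : y ^ 2 ≤ s ^ 2 := by linarith
    have hy1 : -s ≤ y := by nlinarith
    have hy2' : y ≤ s := by nlinarith
    obtain ⟨u, v, hu, hv, huv, hm⟩ := exists_coeffs (by linarith : -s ≤ s) hy1 hy2'
    have hmem := hconv (hsub hQ) (hsub hP) hu hv huv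
    have heq : u • ((x, -s, 2 * x ^ 2 - 1) : ℝ × ℝ × ℝ)
        + v • ((x, s, 2 * x ^ 2 - 1) : ℝ × ℝ × ℝ) = (x, y, 2 * x ^ 2 - 1) := by
      simp only [Prod.smul_def, smul_eq_mul, Prod.mk_add_mk, Prod.mk.injEq]
      refine ⟨by linear_combination x * huv, by linear_combination hm,
        by linear_combination (2 * x ^ 2 - 1) * huv⟩
    rwa [heq] at hmem
  -- top surface points are in the hull
  have top : ∀ x y : ℝ, x ^ 2 + y ^ 2 ≤ 1 →
      ((x, y, 1 - 2 * y ^ 2) : ℝ × ℝ × ℝ) ∈ convexHull ℝ S := by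
    intro x y hxy
    set s := Real.sqrt (1 - y ^ 2) with hs
    have hy1 : 0 ≤ 1 - y ^ 2 := by nlinarith [sq_nonneg x]
    have hs2 : s ^ 2 = 1 - y ^ 2 := Real.sq_sqrt hy1
    have hsnn : 0 ≤ s := Real.sqrt_nonneg _
    have hzP : 2 * s ^ 2 - 1 = 1 - 2 * y ^ 2 := by rw [hs2]; ring
    have hP : ((s, y, 1 - 2 * y ^ 2) : ℝ × ℝ × ℝ) ∈ S := by
      rw [← hzP]; exact mem_curve (by linarith)
    have hQ : ((-s, y, 1 - 2 * y ^ 2) : ℝ × ℝ × ℝ) ∈ S := by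
      have h := mem_curve (a := -s) (b := y) (by nlinarith)
      have h2 : 2 * (-s) ^ 2 - 1 = 1 - 2 * y ^ 2 := by nlinarith
      rwa [h2] at h
    have hx2 : x ^ 2 ≤ s ^ 2 := by linarith
    have hx1' : -s ≤ x := by nlinarith
    have hx2' : x ≤ s := by nlinarith
    obtain ⟨u, v, hu, hv, huv, hm⟩ := exists_coeffs (by linarith : -s ≤ s) hx1' hx2'
    have hmem := hconv (hsub hQ) (hsub hP) hu hv huv
    have heq : u • ((-s, y, 1 - 2 * y ^ 2) : ℝ × ℝ × ℝ)
        + v • ((s, y, 1 - 2 * y ^ 2) : ℝ × ℝ × ℝ) = (x, y, 1 - 2 * y ^ 2) := by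
      simp only [Prod.smul_def, smul_eq_mul, Prod.mk_add_mk, Prod.mk.injEq]
      refine ⟨by linear_combination hm, by linear_combination y * huv,
        by linear_combination (1 - 2 * y ^ 2) * huv⟩
    rwa [heq] at hmem
  apply le_antisymm
  · -- convexHull S ⊆ T
    apply convexHull_min
    · rintro ⟨x, y, z⟩ ⟨φ, _, _, hx⟩
      have hpyth := Real.sin_sq_add_cos_sq φ
      simp only [Prod.mk.injEq] at hx
      obtain ⟨h1, h2, h3⟩ := hx
      subst h1 h2 h3
      refine ⟨?_, ?_, ?_⟩ <;> dsimp only <;> nlinarith [hpyth]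
    · -- T is convex
      rintro ⟨x, y, z⟩ ⟨hx1, hx2, hx3⟩ ⟨x', y', z'⟩ ⟨hy1, hy2, hy3⟩ u v hu hv huv
      simp only [Set.mem_setOf_eq, Prod.smul_def, smul_eq_mul, Prod.mk_add_mk] at *
      have c1 := sq_combo (p := x) (q := x') hu hv huv
      have c2 := sq_combo (p := y) (q := y') hu hv huv
      have d1 := mul_le_mul_of_nonneg_left hx1 hu
      have d2 := mul_le_mul_of_nonneg_left hy1 hv
      have e1 := mul_le_mul_of_nonneg_left hx2 hu
      have e2 := mul_le_mul_of_nonneg_left hy2 hv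
      have f1 := mul_le_mul_of_nonneg_left hx3 hu
      have f2 := mul_le_mul_of_nonneg_left hy3 hv
      refine ⟨by nlinarith, by nlinarith, by nlinarith⟩
  · -- T ⊆ convexHull S
    rintro ⟨x, y, z⟩ ⟨h1, h2, h3⟩
    simp only [Set.mem_setOf_eq] at h1 h2 h3
    have hB := bottom x y h1
    have hT := top x y h1
    obtain ⟨u, v, hu, hv, huv, hm⟩ :=
      exists_coeffs (by nlinarith : 2 * x ^ 2 - 1 ≤ 1 - 2 * y ^ 2) h2 h3
    have hmem := hconv hB hT hu hv huv
    have heq : u • ((x, y, 2 * x ^ 2 - 1) : ℝ × ℝ × ℝ)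
        + v • ((x, y, 1 - 2 * y ^ 2) : ℝ × ℝ × ℝ) = (x, y, z) := by
      simp only [Prod.smul_def, smul_eq_mul, Prod.mk_add_mk, Prod.mk.injEq]
      refine ⟨by linear_combination x * huv, by linear_combination y * huv,
        by linear_combination hm⟩
    rwa [heq] at hmem
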